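/- arXiv:2412.00399 — 3 statements merged into one kernel-verified Lean document; each statement's English description precedes it below -/
import Mathlib

section
/- Fix an integer n ≥ 2. Let R_univ = ℂ[x_{ij} : 1 ≤ i ≤ n, 1 ≤ j ≤ n−1][a], let d_2 be the n × (n−1) matrix with entries x_{ij}, and let d_1 be the 1 × n row vector whose j-th entry is (−1)^{j+1} · a · det(d_2 with its j-th row deleted). Then the complex F^univ : 0 → R_univ^{n−1} → R_univ^n → R_univ with differentials d_2 and d_1 is acyclic, i.e., exact at R_univ^{n−1} and at R_univ^n. -/
/-!
STATEMENT 2: The universal Hilbert–Burch complex F^univ of format (1, n, n−1) is acyclic,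
i.e. exact at R_univ^{n-1} and at R_univ^n.
-/

open Matrix

/-- The map `Fin (n-1) → Fin n` skipping the row `j` (deletion of the `j`-th row). -/
def delRow {n : ℕ} (j : Fin n) (i : Fin (n - 1)) : Fin n :=
  if h : (i : ℕ) < (j : ℕ) then ⟨i, lt_trans h j.2⟩
  else ⟨(i : ℕ) + 1, by have := i.2; have := j.2; omega⟩

/-- The universal ring for the format `(1, n, n-1)`: a polynomial ring over `ℂ` in the
`n(n-1)` variables `x_{ij}` and one further variable `a`. -/
noncomputable abbrev HBUnivRing (n : ℕ) : Type :=
  MvPolynomial ((Fin n × Fin (n - 1)) ⊕ Unit) ℂ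

/-- The generic `n × (n-1)` matrix of variables. -/
noncomputable def HBd2 (n : ℕ) : Matrix (Fin n) (Fin (n - 1)) (HBUnivRing n) :=
  fun i j => MvPolynomial.X (Sum.inl (i, j))

/-- The row vector whose `j`-th entry is `(-1)^(j+1) · a ·` (the maximal minor of the
generic matrix obtained by deleting its `j`-th row). -/
noncomputable def HBd1 (n : ℕ) : Matrix (Fin 1) (Fin n) (HBUnivRing n) :=
  fun _ j => (-1 : HBUnivRing n) ^ ((j : ℕ) + 1) *
    MvPolynomial.X (Sum.inr ()) * ((HBd2 n).submatrix (delRow j) id).det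


section Aux

open MvPolynomial

namespace HB

variable (m : ℕ)

abbrev V (m : ℕ) := (Fin (m+1) × Fin ((m+1) - 1)) ⊕ Unit

example : HBUnivRing (m+1) = MvPolynomial (V m) ℂ := rfl

lemma delRow_eq (j : Fin (m+1)) : delRow j = Fin.succAbove j := by
  funext i
  simp only [delRow, Fin.succAbove]
  split_ifs with h1 h2 h2
  · exact Fin.ext rfl
  · exact absurd (by simpa [Fin.lt_def] using h1) h2
  · exact absurd (by simpa [Fin.lt_def] using h2) h1
  · exact Fin.ext rfl

noncomputable def Δ (j : Fin (m+1)) : MvPolynomial (V m) ℂ :=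
  ((HBd2 (m+1)).submatrix (Fin.succAbove j) id).det

def gmap (j : Fin (m+1)) : Fin m × Fin m → V m := fun p => Sum.inl (j.succAbove p.1, p.2)

lemma gmap_injective (j : Fin (m+1)) : Function.Injective (gmap m j) := by
  rintro ⟨a, b⟩ ⟨c, d⟩ h
  simp only [gmap, Sum.inl.injEq, Prod.mk.injEq] at h
  exact Prod.ext (Fin.succAbove_right_injective h.1) h.2

lemma delta_eq_rename (j : Fin (m+1)) :
    Δ m j = rename (gmap m j) (det (mvPolynomialX (Fin m) (Fin m) ℂ)) := by
  have h : (mvPolynomialX (Fin m) (Fin m) ℂ).map (rename (gmap m j)) =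
      (HBd2 (m+1)).submatrix (Fin.succAbove j) id := by
    ext i k
    simp [HBd2, gmap, mvPolynomialX, rename_X]
  have h2 := RingHom.map_det
    ((rename (gmap m j)).toRingHom : MvPolynomial (Fin m × Fin m) ℂ →+* MvPolynomial (V m) ℂ)
    (mvPolynomialX (Fin m) (Fin m) ℂ)
  rw [Δ, ← h]
  exact h2.symm

lemma delta_ne_zero (j : Fin (m+1)) : Δ m j ≠ 0 := by
  rw [delta_eq_rename]
  intro h
  exact det_mvPolynomialX_ne_zero (Fin m) ℂ
    ((rename_injective _ (gmap_injective m j)) (by simpa using h))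

end HB

section Vars

open Matrix MvPolynomial

variable {σ : Type*} [DecidableEq σ]

lemma optionEquivLeft_rename_some {τ : Type*} (f : MvPolynomial τ ℂ) :
    optionEquivLeft ℂ τ (rename some f) = Polynomial.C f := by
  induction f using MvPolynomial.induction_on with
  | C c => simp [optionEquivLeft_C]
  | add p q hp hq => simp only [map_add, hp, hq]
  | mul_X p s hp => simp only [_root_.map_mul, hp, rename_X, optionEquivLeft_X_some]

lemma not_mem_vars_of_rename {x : σ} (g : MvPolynomial {y : σ // y ≠ x} ℂ) :
    x ∉ (rename (Subtype.val : {y : σ // y ≠ x} → σ) g).vars := by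
  intro hx
  obtain ⟨y, _, hy⟩ := MvPolynomial.mem_vars_rename _ _ hx
  exact y.2 hy

lemma not_mem_vars_of_dvd {p q : MvPolynomial σ ℂ} (hp : p ≠ 0)
    (hdvd : q ∣ p) {x : σ} (hx : x ∉ p.vars) : x ∉ q.vars := by
  classical
  obtain ⟨r, rfl⟩ := hdvd
  have hq : q ≠ 0 := fun h => hp (by simp [h])
  have hr : r ≠ 0 := fun h => hp (by simp [h])
  -- p is a polynomial in the variables ≠ x
  obtain ⟨p', hp'⟩ := MvPolynomial.exists_rename_eq_of_vars_subset_range (q * r)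
    (Subtype.val : {y : σ // y ≠ x} → σ) Subtype.val_injective
    (by rintro y hy; exact ⟨⟨y, fun h => hx (h ▸ hy)⟩, rfl⟩)
  set e : σ ≃ Option {y : σ // y ≠ x} := (Equiv.optionSubtypeNe x).symm
  set ψ : MvPolynomial σ ℂ ≃ₐ[ℂ] Polynomial (MvPolynomial {y : σ // y ≠ x} ℂ) :=
    (renameEquiv ℂ e).trans (optionEquivLeft ℂ {y : σ // y ≠ x})
  have key : ∀ f : MvPolynomial {y : σ // y ≠ x} ℂ,
      ψ (rename Subtype.val f) = Polynomial.C f := by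
    intro f
    have hcomp : ⇑e ∘ (Subtype.val : {y : σ // y ≠ x} → σ) = some := by
      funext y
      simp [e, Equiv.optionSubtypeNe_symm_of_ne y.2]
    simp only [ψ, AlgEquiv.trans_apply, renameEquiv_apply, rename_rename, hcomp,
      optionEquivLeft_rename_some]
  have hψp : ψ (q * r) = Polynomial.C p' := by rw [← hp', key]
  have hqr0 : (ψ q).natDegree = 0 := by
    have hdeg : (ψ q).natDegree + (ψ r).natDegree = 0 := by
      rw [← Polynomial.natDegree_mul (by simpa using hq) (by simpa using hr), ← _root_.map_mul, hψp,
        Polynomial.natDegree_C]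
    omega
  obtain ⟨c, hc⟩ : ∃ c, ψ q = Polynomial.C c :=
    ⟨(ψ q).coeff 0, Polynomial.eq_C_of_natDegree_eq_zero hqr0⟩
  have : q = rename Subtype.val c := by
    apply ψ.injective
    rw [hc, key]
  rw [this]
  exact not_mem_vars_of_rename c

end Vars

namespace HB

open Matrix MvPolynomial

variable (m : ℕ)

lemma vars_delta (j : Fin (m+1)) {x : V m} (hx : x ∈ (Δ m j).vars) :
    ∃ p : Fin m × Fin m, x = Sum.inl (j.succAbove p.1, p.2) := by
  rw [delta_eq_rename] at hx
  obtain ⟨p, _, hp⟩ := MvPolynomial.mem_vars_rename _ _ hx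
  exact ⟨p, hp.symm⟩

lemma isUnit_of_dvd_all {q : MvPolynomial (V m) ℂ} (h : ∀ j, q ∣ Δ m j) : IsUnit q := by
  classical
  have hvars : ∀ x : V m, x ∉ q.vars := by
    rintro (⟨i, k⟩ | ⟨⟩) hx
    · refine not_mem_vars_of_dvd (delta_ne_zero m i) (h i) (fun hmem => ?_) hx
      obtain ⟨p, hp⟩ := vars_delta m i hmem
      have h2 := Sum.inl_injective hp
      exact Fin.succAbove_ne i p.1 (congrArg Prod.fst h2).symm
    · refine not_mem_vars_of_dvd (delta_ne_zero m 0) (h 0) (fun hmem => ?_) hx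
      obtain ⟨p, hp⟩ := vars_delta m 0 hmem
      exact nomatch hp
  obtain ⟨q', hq'⟩ := MvPolynomial.exists_rename_eq_of_vars_subset_range q
    (Empty.elim : Empty → V m) (fun a => a.elim)
    (by rintro y hy; exact absurd hy (hvars y))
  obtain ⟨c, rfl⟩ := MvPolynomial.C_surjective Empty q'
  rw [rename_C] at hq'
  have hq0 : q ≠ 0 := fun h0 => delta_ne_zero m 0 (by simpa [h0] using h 0)
  have hc : c ≠ 0 := fun h0 => hq0 (by rw [← hq', h0, map_zero])
  rw [← hq']
  exact (isUnit_iff_ne_zero.mpr hc).map (MvPolynomial.C : ℂ →+* MvPolynomial (V m) ℂ)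

lemma exists_preimage {K : Type*} [Field K] [Algebra (MvPolynomial (V m) ℂ) K]
    [IsFractionRing (MvPolynomial (V m) ℂ) K] (u : K)
    (h : ∀ j : Fin (m+1), ∃ r, algebraMap (MvPolynomial (V m) ℂ) K (Δ m j) * u
      = algebraMap (MvPolynomial (V m) ℂ) K r) :
    ∃ w, algebraMap (MvPolynomial (V m) ℂ) K w = u := by
  let A := MvPolynomial (V m) ℂ
  let φ := algebraMap A K
  have hφinj : Function.Injective φ := IsFractionRing.injective A K
  have hden0 : φ (IsFractionRing.den A u : A) ≠ 0 :=
    IsFractionRing.to_map_ne_zero_of_mem_nonZeroDivisors (IsFractionRing.den A u).2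
  have hnum : u * φ (IsFractionRing.den A u : A) = φ (IsFractionRing.num A u) :=
    IsFractionRing.num_mul_den_eq_num_iff_eq.mpr rfl
  have hd : ∀ j, (IsFractionRing.den A u : A) ∣ Δ m j := by
    intro j
    obtain ⟨r, hr⟩ := h j
    have key : Δ m j * IsFractionRing.num A u = (IsFractionRing.den A u : A) * r := by
      apply hφinj
      rw [_root_.map_mul, _root_.map_mul, ← hnum, ← mul_assoc, hr, mul_comm]
    exact ((IsFractionRing.num_den_reduced A u).symm).dvd_of_dvd_mul_right ⟨r, key⟩
  obtain ⟨ε, hε⟩ := isUnit_of_dvd_all m (fun j => hd j)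
  refine ⟨IsFractionRing.num A u * (↑ε⁻¹ : A), ?_⟩
  apply mul_right_cancel₀ hden0
  rw [hnum, ← _root_.map_mul]
  congr 1
  rw [mul_assoc, ← hε]
  simp

end HB

namespace HB

open Matrix MvPolynomial

variable (m : ℕ)

noncomputable def Bmat (v : Fin (m+1) → MvPolynomial (V m) ℂ) :
    Matrix (Fin (m+1)) (Fin (m+1)) (MvPolynomial (V m) ℂ) :=
  Matrix.of fun i l => Fin.cases (v i) (fun k => HBd2 (m+1) i k) l

lemma det_Bmat (v : Fin (m+1) → MvPolynomial (V m) ℂ) :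
    (Bmat m v).det = ∑ j : Fin (m+1), (-1 : MvPolynomial (V m) ℂ) ^ (j : ℕ) * v j * Δ m j := by
  rw [det_succ_column_zero]
  refine Finset.sum_congr rfl fun j _ => ?_
  have h1 : Bmat m v j 0 = v j := rfl
  have h2 : (Bmat m v).submatrix j.succAbove Fin.succ = (HBd2 (m+1)).submatrix j.succAbove id := by
    ext r k
    simp [Bmat, submatrix_apply]
  rw [h1, h2]
  exact congrArg _ rfl

lemma ker_d2 : LinearMap.ker (HBd2 (m+1)).mulVecLin = ⊥ := by
  rw [LinearMap.ker_eq_bot']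
  intro v hv
  rw [mulVecLin_apply] at hv
  have h0 : ((HBd2 (m+1)).submatrix (Fin.succAbove 0) id) *ᵥ v = 0 := by
    funext r
    have := congrFun hv ((0 : Fin (m+1)).succAbove r)
    simpa [mulVec, dotProduct, submatrix_apply] using this
  have h1 := congrArg (fun z => adjugate ((HBd2 (m+1)).submatrix (Fin.succAbove 0) id) *ᵥ z) h0
  simp only [mulVec_mulVec, adjugate_mul, mulVec_zero] at h1
  funext k
  have h2 := congrFun h1 k
  simp only [smul_mulVec, one_mulVec, Pi.smul_apply, smul_eq_mul, Pi.zero_apply] at h2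
  rcases mul_eq_zero.mp h2 with h | h
  · exact absurd h (delta_ne_zero m 0)
  · exact h

noncomputable def D1 : Matrix (Fin 1) (Fin (m+1)) (MvPolynomial (V m) ℂ) :=
  fun _ j => (-1 : MvPolynomial (V m) ℂ) ^ ((j : ℕ) + 1) * X (Sum.inr ()) * Δ m j

lemma HBd1_eq : HBd1 (m+1) = D1 m := by
  funext i j
  simp only [HBd1, D1]
  rw [delRow_eq]
  exact congrArg _ (congrArg _ rfl)

lemma d1_eq_det (v : Fin (m+1) → MvPolynomial (V m) ℂ) :
    (HBd1 (m+1)).mulVecLin v = 0 ↔ (Bmat m v).det = 0 := by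
  have hcalc : ((HBd1 (m+1)).mulVecLin v) 0
      = -(X (Sum.inr ()) * (Bmat m v).det) := by
    rw [HBd1_eq, mulVecLin_apply, det_Bmat]
    show ∑ j : Fin (m+1), D1 m 0 j * v j = _
    rw [Finset.mul_sum, ← Finset.sum_neg_distrib]
    refine Finset.sum_congr rfl fun j _ => ?_
    simp only [D1]
    ring
  constructor
  · intro h
    have h0 := congrFun h 0
    rw [hcalc, Pi.zero_apply, neg_eq_zero] at h0
    rcases mul_eq_zero.mp h0 with h' | h'
    · exact absurd h' (MvPolynomial.X_ne_zero _)
    · exact h'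
  · intro h
    funext i
    have : i = 0 := Subsingleton.elim _ _
    subst this
    rw [hcalc, h, mul_zero, neg_zero]
    rfl
end HB

namespace HB

open Matrix MvPolynomial

variable (m : ℕ)

lemma mulVec_Bmat (v c : Fin (m+1) → MvPolynomial (V m) ℂ) (i : Fin (m+1)) :
    (Bmat m v *ᵥ c) i = v i * c 0 + ∑ k : Fin m, HBd2 (m+1) i k * c k.succ := by
  simp only [mulVec, dotProduct, Fin.sum_univ_succ, Bmat, Matrix.of_apply, Fin.cases_zero,
    Fin.cases_succ]

lemma d2_apply (w : Fin m → MvPolynomial (V m) ℂ) (i : Fin (m+1)) :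
    (HBd2 (m+1)).mulVecLin w i = ∑ k : Fin m, HBd2 (m+1) i k * w k := by
  rw [mulVecLin_apply]
  rfl

lemma exists_good_w (K : Type) [Field K] [Algebra (MvPolynomial (V m) ℂ) K]
    [IsFractionRing (MvPolynomial (V m) ℂ) K]
    (v c : Fin (m+1) → MvPolynomial (V m) ℂ) (hc0ne : c 0 ≠ 0)
    (hdecomp : ∀ i, v i * c 0 + ∑ k : Fin m, HBd2 (m+1) i k * c k.succ = 0) :
    ∃ w, (HBd2 (m+1)).mulVecLin w = v := by
  let φ : MvPolynomial (V m) ℂ →+* K := algebraMap (MvPolynomial (V m) ℂ) K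
  have hφinj : Function.Injective φ := IsFractionRing.injective (MvPolynomial (V m) ℂ) K
  have hφc0 : φ (c 0) ≠ 0 := fun h => hc0ne (hφinj (h.trans (map_zero φ).symm))
  let u : Fin m → K := fun k => -(φ (c k.succ)) / φ (c 0)
  have hu : ∀ i, (∑ k : Fin m, φ (HBd2 (m+1) i k) * u k) = φ (v i) := by
    intro i
    have h1 : φ (v i) * φ (c 0) + ∑ k : Fin m, φ (HBd2 (m+1) i k) * φ (c k.succ) = 0 := by
      have h0 := congrArg φ (hdecomp i)
      rw [map_add, _root_.map_mul, map_zero, map_sum] at h0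
      calc φ (v i) * φ (c 0) + ∑ k : Fin m, φ (HBd2 (m+1) i k) * φ (c k.succ)
          = φ (v i) * φ (c 0) + ∑ k : Fin m, φ (HBd2 (m+1) i k * c k.succ) := by
            congr 1
            exact Finset.sum_congr rfl (fun k _ => (_root_.map_mul φ _ _).symm)
        _ = 0 := h0
    have h2 : ∑ k : Fin m, φ (HBd2 (m+1) i k) * φ (c k.succ) = -(φ (v i) * φ (c 0)) := by
      linear_combination h1
    calc ∑ k : Fin m, φ (HBd2 (m+1) i k) * u k
        = ∑ k : Fin m, -((φ (HBd2 (m+1) i k) * φ (c k.succ)) / φ (c 0)) :=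
          Finset.sum_congr rfl (fun k _ => by
            show _ * (-(φ (c k.succ)) / φ (c 0)) = _
            ring)
      _ = -((∑ k : Fin m, φ (HBd2 (m+1) i k) * φ (c k.succ)) / φ (c 0)) := by
          rw [Finset.sum_neg_distrib, Finset.sum_div]
      _ = φ (v i) := by
          rw [h2]
          field_simp
  have hint : ∀ k : Fin m, ∃ wk, φ wk = u k := by
    intro k
    have main : ∀ j : Fin (m+1), φ (Δ m j) * u k
        = φ ((adjugate ((HBd2 (m+1)).submatrix (Fin.succAbove j) id)
            *ᵥ fun r => v (j.succAbove r)) k) := by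
      intro j
      have key : (((HBd2 (m+1)).submatrix (Fin.succAbove j) id).map φ) *ᵥ u
          = fun r => φ (v (j.succAbove r)) := by
        funext r
        have h5 : ∑ s : Fin m, φ (((HBd2 (m+1)).submatrix (Fin.succAbove j) id) r s) * u s
            = φ (v (j.succAbove r)) := hu (j.succAbove r)
        rw [← h5]
        rfl
      have h3 := congrArg
        (fun z => adjugate (((HBd2 (m+1)).submatrix (Fin.succAbove j) id).map φ) *ᵥ z) key
      simp only [mulVec_mulVec, adjugate_mul] at h3
      have hdet2 : (((HBd2 (m+1)).submatrix (Fin.succAbove j) id).map φ).det = φ (Δ m j) :=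
        (RingHom.map_det φ _).symm
      have hadjm : adjugate (((HBd2 (m+1)).submatrix (Fin.succAbove j) id).map φ)
          = (adjugate ((HBd2 (m+1)).submatrix (Fin.succAbove j) id)).map φ :=
        (RingHom.map_adjugate φ _).symm
      rw [hdet2, hadjm, smul_mulVec, one_mulVec] at h3
      have h4 := congrFun h3 k
      rw [Pi.smul_apply, smul_eq_mul] at h4
      rw [h4]
      show ∑ s : Fin m, φ (adjugate ((HBd2 (m+1)).submatrix (Fin.succAbove j) id) k s)
          * φ (v (j.succAbove s)) = _
      calc ∑ s : Fin m, φ (adjugate ((HBd2 (m+1)).submatrix (Fin.succAbove j) id) k s)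
            * φ (v (j.succAbove s))
          = ∑ s : Fin m, φ (adjugate ((HBd2 (m+1)).submatrix (Fin.succAbove j) id) k s
              * v (j.succAbove s)) :=
            Finset.sum_congr rfl (fun s _ => (_root_.map_mul φ _ _).symm)
        _ = φ (∑ s : Fin m, adjugate ((HBd2 (m+1)).submatrix (Fin.succAbove j) id) k s
              * v (j.succAbove s)) := (map_sum φ _ _).symm
        _ = φ ((adjugate ((HBd2 (m+1)).submatrix (Fin.succAbove j) id)
              *ᵥ fun r => v (j.succAbove r)) k) := rfl
    exact exists_preimage m (u k) (fun j =>
      ⟨(adjugate ((HBd2 (m+1)).submatrix (Fin.succAbove j) id)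
          *ᵥ fun r => v (j.succAbove r)) k, main j⟩)
  choose w hw using hint
  refine ⟨w, ?_⟩
  funext i
  apply hφinj
  rw [d2_apply, map_sum, ← hu i]
  exact Finset.sum_congr rfl fun k _ => by rw [_root_.map_mul, hw k]

lemma ker_d1 : LinearMap.ker (HBd1 (m+1)).mulVecLin
    = LinearMap.range (HBd2 (m+1)).mulVecLin := by
  ext v
  simp only [LinearMap.mem_ker, LinearMap.mem_range]
  constructor
  · intro hv
    have hdet : (Bmat m v).det = 0 := (d1_eq_det m v).mp hv
    obtain ⟨c, hc0, hc⟩ := (Matrix.exists_mulVec_eq_zero_iff).mpr hdet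
    have hdecomp : ∀ i, v i * c 0 + ∑ k : Fin m, HBd2 (m+1) i k * c k.succ = 0 := by
      intro i
      rw [← mulVec_Bmat m v c i, hc]
      rfl
    have hc0ne : c 0 ≠ 0 := by
      intro h0
      apply hc0
      have hthis : ∀ i, ∑ k : Fin m, HBd2 (m+1) i k * c k.succ = 0 := by
        intro i
        have := hdecomp i
        rwa [h0, mul_zero, zero_add] at this
      have hker : (HBd2 (m+1)).mulVecLin (fun k => c k.succ) = 0 := by
        funext i
        rw [d2_apply]
        exact hthis i
      have hz : (fun k : Fin m => c k.succ) = 0 := by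
        have hbot := ker_d2 m
        rw [LinearMap.ker_eq_bot'] at hbot
        exact hbot _ hker
      funext l
      induction l using Fin.cases with
      | zero => exact h0
      | succ k => exact congrFun hz k
    exact exists_good_w m (FractionRing (MvPolynomial (V m) ℂ)) v c hc0ne hdecomp
  · rintro ⟨w, rfl⟩
    apply (d1_eq_det m _).mpr
    apply (Matrix.exists_mulVec_eq_zero_iff).mp
    refine ⟨fun l : Fin (m+1) => Fin.cases (-1) w l, fun h => ?_, ?_⟩
    · have h0 := congrFun h 0
      simp only [Fin.cases_zero, Pi.zero_apply] at h0
      exact one_ne_zero (neg_eq_zero.mp h0)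
    · funext i
      rw [mulVec_Bmat]
      simp only [Fin.cases_zero, Fin.cases_succ, Pi.zero_apply]
      rw [d2_apply]
      ring

end HB

end Aux

theorem hilbert_burch_universal_complex_acyclic (n : ℕ) (hn : 2 ≤ n) :
    LinearMap.ker (HBd2 n).mulVecLin = ⊥ ∧
    LinearMap.ker (HBd1 n).mulVecLin = LinearMap.range (HBd2 n).mulVecLin := by
  obtain ⟨m, rfl⟩ : ∃ m, n = m + 1 := ⟨n - 1, by omega⟩
  exact ⟨HB.ker_d2 m, HB.ker_d1 m⟩
end

section
/- Let R be a commutative Noetherian ring and let F : 0 → F_n → … → F_1 → F_0 be a complex of finite free R-modules with differentials d_k that is acyclic in grade 1, with Buchsbaum–Eisenbud multipliers a_1, …, a_n (relative to fixed isomorphisms φ_i : Λ^{f_i} F_i ≅ R, where f_i = rank F_i). If moreover grade I(d_1) ≥ 2 and rank d_1 = rank F_0, then the element of R corresponding to a_1 ∈ Λ^{rank F_0} F_0 under the isomorphism φ_0 : Λ^{f_0} F_0 ≅ R is a unit of R. -/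
/-!
STATEMENT 6: For a complex of finite free modules over a commutative Noetherian ring that
is acyclic in grade 1, with Buchsbaum–Eisenbud multipliers a₁, …, aₙ (relative to fixed
isomorphisms φ_i : Λ^{f_i} F_i ≅ R), if grade I(d₁) ≥ 2 and rank d₁ = rank F₀, then
φ₀(a₁) is a unit of R. (The index i = 1, …, n is written as i = j + 1.)
-/

/-- The supremum (in `ℕ∞`) of the lengths of `R`-regular sequences contained in `I`. -/
noncomputable def regSeqSup {R : Type*} [CommRing R] (I : Ideal R) : ℕ∞ :=
  sSup {N : ℕ∞ | ∃ rs : List R, (∀ r ∈ rs, r ∈ I) ∧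
    RingTheory.Sequence.IsRegular R rs ∧ N = rs.length}

open Classical in
/-- The grade of an ideal: the length of a maximal regular sequence contained in it,
with the convention `grade R = ⊤` for the unit ideal. -/
noncomputable def idealGrade {R : Type*} [CommRing R] (I : Ideal R) : ℕ∞ :=
  if I = ⊤ then ⊤ else regSeqSup I

/-- The ideal of `r × r` minors of a matrix (so `minorsIdeal 0 M = R`). -/
def minorsIdeal {R : Type*} [CommRing R] {a b : ℕ} (r : ℕ)
    (M : Matrix (Fin a) (Fin b) R) : Ideal R :=
  Ideal.span {x : R | ∃ (rows : Fin r → Fin a) (cols : Fin r → Fin b),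
    x = (M.submatrix rows cols).det}

/-- The rank of a matrix over a commutative ring: the largest `r` such that the ideal of
`r × r` minors is nonzero. -/
noncomputable def matrixRank {R : Type*} [CommRing R] {a b : ℕ}
    (M : Matrix (Fin a) (Fin b) R) : ℕ :=
  sSup {r : ℕ | minorsIdeal r M ≠ ⊥}

/-- A complex `0 → R^{f n} → ⋯ → R^{f 1} → R^{f 0}` of finite free `R`-modules, encoded by
its matrices of differentials; `d k` is the matrix of the differential `F_{k+1} → F_k`.
(A format of length `n` is encoded by a function `f : ℕ → ℕ` vanishing above `n`;
in particular `d n` is the zero matrix `d_{n+1} = 0`.) -/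
structure MatrixComplex (R : Type*) [CommRing R] (f : ℕ → ℕ) where
  d : ∀ k : ℕ, Matrix (Fin (f k)) (Fin (f (k + 1))) R
  comp_eq_zero : ∀ k : ℕ, d k * d (k + 1) = 0

/-- The complex is acyclic in grade `c`: its localization at every prime of grade at most
`c` is exact at all positive positions. -/
def MatrixComplex.IsAcyclicInGrade {R : Type*} [CommRing R] {f : ℕ → ℕ}
    (n c : ℕ) (C : MatrixComplex R f) : Prop :=
  ∀ (p : Ideal R) (_ : p.IsPrime), idealGrade p ≤ (c : ℕ∞) →
    ∀ k : ℕ, k < n →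
      LinearMap.ker ((C.d k).map (algebraMap R (Localization.AtPrime p))).mulVecLin =
        LinearMap.range ((C.d (k + 1)).map (algebraMap R (Localization.AtPrime p))).mulVecLin


section AuxLemmas

variable {R : Type*} [CommRing R]

open ExteriorAlgebra

/-- Any `m`-fold wedge of vectors of `R^m` is the determinant times the standard wedge. -/
lemma aux_iMulti_eq_det_smul (m : ℕ) (v : Fin m → (Fin m → R)) :
    ExteriorAlgebra.ιMulti R m v =
      ((Pi.basisFun R (Fin m)).det v) •
        ExteriorAlgebra.ιMulti R m ⇑(Pi.basisFun R (Fin m)) := by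
  classical
  set b := Pi.basisFun R (Fin m) with hb
  set ω := ExteriorAlgebra.ιMulti R m ⇑b with hω
  have h : (ExteriorAlgebra.ιMulti R m (M := Fin m → R)) =
      (LinearMap.toSpanSingleton R _ ω).compAlternatingMap b.det := by
    refine Module.Basis.ext_alternating b fun w hw => ?_
    let σ : Equiv.Perm (Fin m) := Equiv.ofBijective w (Finite.injective_iff_bijective.1 hw)
    have hσ : (fun i => b (w i)) = ⇑b ∘ ⇑σ := rfl
    rw [hσ, AlternatingMap.map_perm, LinearMap.compAlternatingMap_apply,
      AlternatingMap.map_perm, Module.Basis.det_self, LinearMap.toSpanSingleton_apply,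
      Units.smul_def, Units.smul_def, zsmul_eq_mul, smul_assoc]
    simp [one_smul, algebraMap_int_eq, hω]
  conv_lhs => rw [h]
  simp [LinearMap.toSpanSingleton_apply]

/-- Every element of the top exterior power of `R^m` is a multiple of the standard wedge. -/
lemma aux_top_power_eq_span (m : ℕ) {z : ExteriorAlgebra R (Fin m → R)}
    (hz : z ∈ ⋀[R]^m (Fin m → R)) :
    ∃ r : R, z = r • ExteriorAlgebra.ιMulti R m ⇑(Pi.basisFun R (Fin m)) := by
  rw [← ExteriorAlgebra.ιMulti_span_fixedDegree] at hz
  induction hz using Submodule.span_induction with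
  | mem x hx =>
    obtain ⟨v, rfl⟩ := hx
    exact ⟨_, aux_iMulti_eq_det_smul m v⟩
  | zero => exact ⟨0, by simp⟩
  | add x y _ _ hx hy =>
    obtain ⟨r, rfl⟩ := hx; obtain ⟨s, rfl⟩ := hy
    exact ⟨r + s, (add_smul r s _).symm⟩
  | smul c x _ hx =>
    obtain ⟨r, rfl⟩ := hx
    exact ⟨c * r, (mul_smul c r _).symm⟩

/-- If an ideal of grade at least 2 is contained in the principal ideal `(u)`,
then `u` is a unit. -/
lemma aux_isUnit_of_grade_two_le {u : R} {I : Ideal R}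
    (hI : I ≤ Ideal.span {u}) (h2 : (2 : ℕ∞) ≤ idealGrade I) : IsUnit u := by
  by_cases hspan : Ideal.span {u} = ⊤
  · exact Ideal.span_singleton_eq_top.mp hspan
  have hItop : I ≠ ⊤ := fun h => hspan (top_le_iff.mp (h ▸ hI))
  rw [idealGrade, if_neg hItop] at h2
  have hex : ∃ rs : List R, (∀ r ∈ rs, r ∈ I) ∧
      RingTheory.Sequence.IsRegular R rs ∧ 2 ≤ rs.length := by
    by_contra hc
    push_neg at hc
    have hle : regSeqSup I ≤ 1 := by
      apply sSup_le
      rintro N ⟨rs, h1, hreg, rfl⟩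
      have := hc rs h1 hreg
      exact_mod_cast Nat.lt_succ_iff.mp (by omega : rs.length < 2)
    have : (2 : ℕ∞) ≤ 1 := le_trans h2 hle
    norm_num at this
  obtain ⟨rs, hmem, hreg, hlen⟩ := hex
  match rs, hmem, hreg, hlen with
  | r0 :: r1 :: rest, hmem, hreg, hlen =>
    have hw := hreg.toIsWeaklyRegular
    rw [RingTheory.Sequence.isWeaklyRegular_cons_iff] at hw
    obtain ⟨hr0, hw'⟩ := hw
    rw [RingTheory.Sequence.isWeaklyRegular_cons_iff] at hw'
    obtain ⟨hr1, -⟩ := hw'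
    obtain ⟨s0, hs0⟩ := Ideal.mem_span_singleton'.mp (hI (hmem r0 (by simp)))
    obtain ⟨s1, hs1⟩ := Ideal.mem_span_singleton'.mp (hI (hmem r1 (by simp)))
    have key : r1 • (Submodule.Quotient.mk s0 : QuotSMulTop r0 R) =
        r1 • (0 : QuotSMulTop r0 R) := by
      rw [smul_zero, ← Submodule.Quotient.mk_smul, Submodule.Quotient.mk_eq_zero]
      have : r1 • s0 = r0 • s1 := by
        rw [smul_eq_mul, smul_eq_mul, ← hs0, ← hs1]; ring
      rw [this]
      exact Submodule.smul_mem_pointwise_smul s1 r0 ⊤ trivial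
    have hmk : (Submodule.Quotient.mk s0 : QuotSMulTop r0 R) = 0 := hr1 key
    rw [Submodule.Quotient.mk_eq_zero] at hmk
    obtain ⟨t, -, ht⟩ := Set.mem_smul_set.mp hmk
    have hfin : r0 * (u * t) = r0 * 1 := by
      have : r0 • t = s0 := ht
      rw [smul_eq_mul] at this
      calc r0 * (u * t) = u * (r0 * t) := by ring
        _ = u * s0 := by rw [this]
        _ = r0 * 1 := by rw [← hs0]; ring
    have : u * t = 1 := hr0 (by simpa [smul_eq_mul] using hfin)
    exact IsUnit.of_mul_eq_one (a := u) t this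

end AuxLemmas

theorem first_multiplier_isUnit_of_grade_two
    (R : Type*) [CommRing R] [IsNoetherianRing R]
    (n : ℕ) (hn : 1 ≤ n) (f : ℕ → ℕ) (hf : ∀ k, n < k → f k = 0)
    (C : MatrixComplex R f)
    (hacyclic : C.IsAcyclicInGrade n 1)
    -- fixed identifications φ_i : Λ^{f_i} F_i ≅ R
    (φ : ∀ i : ℕ, (⋀[R]^(f i) (Fin (f i) → R)) ≃ₗ[R] R)
    -- the Buchsbaum–Eisenbud multipliers a₁, …, aₙ (with a_{n+1} = 1):
    (a : (i : ℕ) → ExteriorAlgebra R (Fin (f (i - 1)) → R))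
    (ha_top : a (n + 1) = 1)
    (ha_mem : ∀ j : ℕ, j + 1 ≤ n →
      a (j + 1) ∈ ⋀[R]^(matrixRank (C.d j)) (Fin (f j) → R))
    (ha_eq : ∀ j : ℕ, j + 1 ≤ n →
      ∀ x ∈ ⋀[R]^(matrixRank (C.d j)) (Fin (f (j + 1)) → R),
        ∃ hy : x * a (j + 2) ∈ ⋀[R]^(f (j + 1)) (Fin (f (j + 1)) → R),
          ExteriorAlgebra.map (C.d j).mulVecLin x =
            (φ (j + 1)) ⟨x * a (j + 2), hy⟩ • a (j + 1))
    -- grade I(d₁) ≥ 2 and rank d₁ = rank F₀: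
    (hgrade : (2 : ℕ∞) ≤ idealGrade (minorsIdeal (matrixRank (C.d 0)) (C.d 0)))
    (hrank : matrixRank (C.d 0) = f 0) :
    ∃ hy : a 1 ∈ ⋀[R]^(f 0) (Fin (f 0) → R), IsUnit ((φ 0) ⟨a 1, hy⟩) := by
  classical
  have hy0 : a 1 ∈ ⋀[R]^(f 0) (Fin (f 0) → R) := by
    have := ha_mem 0 hn
    rwa [hrank] at this
  refine ⟨hy0, ?_⟩
  set u : R := (φ 0) ⟨a 1, hy0⟩ with hu
  set b0 := Pi.basisFun R (Fin (f 0)) with hb0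
  set ω := ExteriorAlgebra.ιMulti R (f 0) ⇑b0 with hω
  have hωmem : ω ∈ ⋀[R]^(f 0) (Fin (f 0) → R) :=
    ExteriorAlgebra.ιMulti_range R (f 0) ⟨⇑b0, rfl⟩
  set c : R := (φ 0) ⟨ω, hωmem⟩ with hc0
  have hc : IsUnit c := by
    obtain ⟨z, hz⟩ := (φ 0).surjective 1
    obtain ⟨r, hr⟩ := aux_top_power_eq_span (f 0) z.2
    have hz' : z = r • (⟨ω, hωmem⟩ : ⋀[R]^(f 0) (Fin (f 0) → R)) :=
      Subtype.ext (by simpa using hr)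
    refine IsUnit.of_mul_eq_one (a := c) r ?_
    rw [hz', LinearEquiv.map_smul] at hz
    simpa [mul_comm] using hz
  have hminor : ∀ (cols : Fin (f 0) → Fin (f 1)),
      ((C.d 0).submatrix id cols).det ∈ Ideal.span {u} := by
    intro cols
    set v : Fin (f 0) → (Fin (f 1) → R) := fun i => Pi.single (cols i) (1 : R) with hv
    have hx : ExteriorAlgebra.ιMulti R (f 0) v ∈ ⋀[R]^(matrixRank (C.d 0)) (Fin (f 1) → R) := by
      rw [hrank]
      exact ExteriorAlgebra.ιMulti_range R (f 0) ⟨v, rfl⟩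
    obtain ⟨hyy, heq⟩ := ha_eq 0 hn _ hx
    set coeff : R := (φ 1) ⟨_, hyy⟩ with hcoeff
    have hmapped : (ExteriorAlgebra.map (C.d 0).mulVecLin) (ExteriorAlgebra.ιMulti R (f 0) v)
        = ExteriorAlgebra.ιMulti R (f 0) ((C.d 0).mulVecLin ∘ v) :=
      ExteriorAlgebra.map_apply_ιMulti _ _
    have hmatrix : (Matrix.of fun i => (C.d 0).mulVecLin (v i)) =
        ((C.d 0).submatrix id cols).transpose := by
      ext i j
      simp [hv, Matrix.mulVecLin_apply, Matrix.mulVec_single]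
    have hdet : ExteriorAlgebra.ιMulti R (f 0) ((C.d 0).mulVecLin ∘ v)
        = (((C.d 0).submatrix id cols).det) • ω := by
      rw [aux_iMulti_eq_det_smul]
      rw [← hb0, ← hω]
      congr 1
      rw [hb0, Pi.basisFun_det]
      show ((Matrix.of fun i => (C.d 0).mulVecLin (v i)) : Matrix _ _ R).det = _
      rw [hmatrix, Matrix.det_transpose]
    have hext : (((C.d 0).submatrix id cols).det) • ω = coeff • a 1 := by
      rw [← hdet, ← hmapped, heq, hcoeff]
    have hsub : (((C.d 0).submatrix id cols).det) • (⟨ω, hωmem⟩ : ⋀[R]^(f 0) (Fin (f 0) → R))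
        = coeff • (⟨a 1, hy0⟩ : ⋀[R]^(f 0) (Fin (f 0) → R)) := Subtype.ext (by simpa using hext)
    have hRel : (((C.d 0).submatrix id cols).det) * c = coeff * u := by
      have := congrArg (φ 0) hsub
      rw [LinearEquiv.map_smul, LinearEquiv.map_smul] at this
      simpa [smul_eq_mul, hc0, hu] using this
    obtain ⟨cu, hcu⟩ := hc
    rw [Ideal.mem_span_singleton']
    refine ⟨(↑cu⁻¹ : R) * coeff, ?_⟩
    have h1 : (↑cu⁻¹ : R) * (coeff * u) = (↑cu⁻¹ : R) * ((((C.d 0).submatrix id cols).det) * c) := by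
      rw [hRel]
    calc (↑cu⁻¹ : R) * coeff * u = (↑cu⁻¹ : R) * (coeff * u) := by ring
      _ = (↑cu⁻¹ : R) * ((((C.d 0).submatrix id cols).det) * c) := h1
      _ = (((C.d 0).submatrix id cols).det) * ((↑cu⁻¹ : R) * c) := by ring
      _ = ((C.d 0).submatrix id cols).det := by
          rw [← hcu, Units.inv_mul, mul_one]
  have hIle : minorsIdeal (matrixRank (C.d 0)) (C.d 0) ≤ Ideal.span {u} := by
    rw [hrank, minorsIdeal, Ideal.span_le]
    rintro x ⟨rows, cols, rfl⟩
    by_cases hinj : Function.Injective rows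
    · set σ := Equiv.ofBijective rows (Finite.injective_iff_bijective.1 hinj) with hσ
      have hsub : (C.d 0).submatrix rows cols = ((C.d 0).submatrix id cols).submatrix ⇑σ id := by
        ext i j
        rfl
      rw [hsub, Matrix.det_permute]
      exact Ideal.mul_mem_left _ _ (hminor cols)
    · rw [Function.not_injective_iff] at hinj
      obtain ⟨i, j, hij, hne⟩ := hinj
      have : ((C.d 0).submatrix rows cols).det = 0 := by
        refine Matrix.det_zero_of_row_eq hne ?_
        ext k
        simp [Matrix.submatrix_apply, hij]
      rw [this]
      exact Ideal.zero_mem _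
  exact aux_isUnit_of_grade_two_le hIle hgrade
end

section
/- (Northcott.) Let R be a commutative Noetherian ring and I ⊊ R a proper ideal. Then for every integer n ≥ 0, the maximal length of an R[x_1, …, x_n]-regular sequence contained in the extended ideal I·R[x_1, …, x_n] equals grade I; consequently the true grade of I, defined as sup over n ≥ 0 of these maximal lengths, equals grade I. -/
section NorthcottAux

open Submodule Ideal

variable {R : Type*} [CommRing R] {M : Type*} [AddCommGroup M] [Module R M]

lemma colonBotEq (y : M) : (⊥ : Submodule R M).colon {y} = (R ∙ y).annihilator := by
  ext c
  rw [Submodule.mem_colon_singleton, Submodule.mem_bot, Submodule.mem_annihilator_span_singleton]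

lemma assBound [IsNoetherianRing R] {x : M} (hp : ((R ∙ x).annihilator).IsPrime) :
    associatedPrimes R M ⊆
      insert ((R ∙ x).annihilator) (associatedPrimes R (M ⧸ (R ∙ x))) := by
  rintro q hq0
  obtain ⟨hq, y, rfl⟩ := isAssociatedPrime_iff.mp hq0
  rw [colonBotEq] at hq ⊢
  by_cases hcase : ∃ s : R, s • y ≠ 0 ∧ s • y ∈ (R ∙ x)
  · left
    obtain ⟨s, hz0, hzx⟩ := hcase
    obtain ⟨t, ht⟩ := (Submodule.mem_span_singleton).mp hzx
    have hs : s ∉ (R ∙ y).annihilator := by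
      rw [Submodule.mem_annihilator_span_singleton]; exact hz0
    have ht0 : t ∉ ((R ∙ x).annihilator) := by
      rw [Submodule.mem_annihilator_span_singleton, ht]; exact hz0
    have key : ∀ c : R, c • y = 0 ↔ c • x = 0 := by
      intro c
      constructor
      · intro hcy
        have hz : c • (s • y) = 0 := by rw [smul_comm, hcy, smul_zero]
        rw [← ht] at hz
        have : (c * t) • x = 0 := by rwa [mul_smul]
        have hmem : c * t ∈ (R ∙ x).annihilator := by
          rwa [Submodule.mem_annihilator_span_singleton]
        rcases hp.mem_or_mem hmem with h | h
        · rwa [Submodule.mem_annihilator_span_singleton] at h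
        · exact absurd h ht0
      · intro hcx
        have hz : c • (t • x) = 0 := by rw [smul_comm, hcx, smul_zero]
        rw [ht] at hz
        have : (c * s) • y = 0 := by rwa [mul_smul]
        have hmem : c * s ∈ (R ∙ y).annihilator := by
          rwa [Submodule.mem_annihilator_span_singleton]
        rcases hq.mem_or_mem hmem with h | h
        · rwa [Submodule.mem_annihilator_span_singleton] at h
        · exact absurd h hs
    ext c
    rw [Submodule.mem_annihilator_span_singleton, Submodule.mem_annihilator_span_singleton]
    exact key c
  · right
    push_neg at hcase
    refine isAssociatedPrime_iff.mpr ⟨hq, Submodule.Quotient.mk y, ?_⟩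
    rw [colonBotEq]
    ext c
    rw [Submodule.mem_annihilator_span_singleton, Submodule.mem_annihilator_span_singleton,
      ← Submodule.Quotient.mk_smul, Submodule.Quotient.mk_eq_zero]
    constructor
    · intro h; rw [h]; exact Submodule.zero_mem _
    · intro h; by_contra hne; exact hcase c hne h

lemma assFinite [IsNoetherianRing R] [IsNoetherian R M] :
    (associatedPrimes R M).Finite := by
  suffices H : ∀ N : Submodule R M, (associatedPrimes R (M ⧸ N)).Finite by
    have := H ⊥
    rwa [LinearEquiv.AssociatedPrimes.eq (Submodule.quotEquivOfEqBot ⊥ rfl)] at this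
  intro N
  induction N using IsNoetherian.induction with
  | hgt N ih =>
  by_cases hs : Subsingleton (M ⧸ N)
  · rw [associatedPrimes.eq_empty_of_subsingleton]; exact Set.finite_empty
  · have : Nontrivial (M ⧸ N) := not_subsingleton_iff_nontrivial.mp hs
    obtain ⟨p, hp⟩ := associatedPrimes.nonempty R (M ⧸ N)
    obtain ⟨hprime, z, hz⟩ := isAssociatedPrime_iff.mp hp
    rw [colonBotEq] at hz
    obtain ⟨x, rfl⟩ := Submodule.Quotient.mk_surjective N z
    have hx : x ∉ N := by
      intro hx
      apply hprime.ne_top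
      rw [hz, Submodule.annihilator_eq_top_iff, Submodule.span_singleton_eq_bot,
        Submodule.Quotient.mk_eq_zero]
      exact hx
    have hxmem : x ∈ N ⊔ (R ∙ x) := Submodule.mem_sup_right (Submodule.mem_span_singleton_self x)
    have hlt : N < N ⊔ (R ∙ x) :=
      lt_of_le_of_ne le_sup_left (by intro h; rw [← h] at hxmem; exact hx hxmem)
    have e : ((M ⧸ N) ⧸ (R ∙ (Submodule.Quotient.mk x : M ⧸ N))) ≃ₗ[R]
        M ⧸ (N ⊔ (R ∙ x)) := by
      have hmap : Submodule.map N.mkQ (N ⊔ (R ∙ x)) = (R ∙ (Submodule.Quotient.mk x : M ⧸ N)) := by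
        rw [Submodule.map_sup, Submodule.map_span, Set.image_singleton]
        simp [Submodule.map_mkQ_eq_top]
      exact (Submodule.quotEquivOfEq _ _ hmap.symm).trans
        (Submodule.quotientQuotientEquivQuotient N (N ⊔ (R ∙ x)) le_sup_left)
    have hsub := assBound (x := (Submodule.Quotient.mk x : M ⧸ N)) (hz ▸ hprime)
    rw [LinearEquiv.AssociatedPrimes.eq e] at hsub
    exact Set.Finite.subset (Set.Finite.insert _ (ih _ hlt)) (by rw [← hz] at hsub; exact hsub)

/-- If every element of `I` is a zero divisor on `M`, then `I` kills a nonzero element. -/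
lemma exists_ann_of_allZD [IsNoetherianRing R] [IsNoetherian R M] {I : Ideal R}
    (h : ∀ c ∈ I, ¬ IsSMulRegular M c) : ∃ u : M, u ≠ 0 ∧ ∀ c ∈ I, c • u = 0 := by
  classical
  have hZD : (I : Set R) ⊆ ⋃ p ∈ associatedPrimes R M, (p : Set R) := by
    rw [biUnion_associatedPrimes_eq_zero_divisors]
    intro c hc
    obtain ⟨x, y, hxy, hne⟩ : ∃ x y : M, c • x = c • y ∧ x ≠ y := by
      have := h c hc
      simp only [IsSMulRegular, Function.Injective, not_forall] at this
      obtain ⟨x, y, h1, h2⟩ := this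
      exact ⟨x, y, h1, h2⟩
    exact ⟨x - y, sub_ne_zero.mpr hne, by rw [smul_sub, hxy, sub_self]⟩
  have hfin : (associatedPrimes R M).Finite := assFinite
  have hsub : (I : Set R) ⊆ ⋃ p ∈ (hfin.toFinset : Finset (Ideal R)), (id p : Set R) := by
    intro r hr
    obtain ⟨p, hp, hrp⟩ := Set.mem_iUnion₂.mp (hZD hr)
    exact Set.mem_iUnion₂.mpr ⟨p, hfin.mem_toFinset.mpr hp, hrp⟩
  obtain ⟨p, hps, hIp⟩ := (Ideal.subset_union_prime (⊥ : Ideal R) ⊥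
    (fun p hp _ _ => (hfin.mem_toFinset.mp hp).isPrime)).mp hsub
  obtain ⟨hprime, u, hu⟩ := isAssociatedPrime_iff.mp (hfin.mem_toFinset.mp hps)
  rw [colonBotEq] at hu
  refine ⟨u, ?_, ?_⟩
  · intro h0
    apply hprime.ne_top
    rw [hu, h0, Submodule.annihilator_eq_top_iff, Submodule.span_singleton_eq_bot]
  · intro c hc
    have : c ∈ p := hIp hc
    rw [hu, Submodule.mem_annihilator_span_singleton] at this
    exact this

variable {σ : Type*}

/-- `a` is a nonzerodivisor on `R ⧸ L`. -/
def RegOn (L : Ideal R) (a : R) : Prop := ∀ x : R, a * x ∈ L → x ∈ L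

/-- weakly regular sequence on `R ⧸ K`. -/
def RegSeqOn : Ideal R → List R → Prop
  | _, [] => True
  | K, a :: rs => RegOn K a ∧ RegSeqOn (K ⊔ Ideal.span {a}) rs

/-- `I` kills a nonzero element of `R ⧸ L`. -/
def ZDall (I L : Ideal R) : Prop := ∃ u : R, u ∉ L ∧ ∀ c ∈ I, c * u ∈ L

@[simp] lemma regSeqOn_nil {K : Ideal R} : RegSeqOn K ([] : List R) := trivial

lemma regSeqOn_cons {K : Ideal R} {a : R} {rs : List R} :
    RegSeqOn K (a :: rs) ↔ RegOn K a ∧ RegSeqOn (K ⊔ Ideal.span {a}) rs := Iff.rfl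

lemma regOn_iff_isSMulRegular {L : Ideal R} {a : R} :
    RegOn L a ↔ IsSMulRegular (R ⧸ L) a := by
  constructor
  · intro h z w hzw
    obtain ⟨x, rfl⟩ := Submodule.Quotient.mk_surjective L z
    obtain ⟨y, rfl⟩ := Submodule.Quotient.mk_surjective L w
    simp only [← Submodule.Quotient.mk_smul] at hzw
    rw [Submodule.Quotient.eq] at hzw
    rw [Submodule.Quotient.eq]
    have : a * (x - y) ∈ L := by rw [mul_sub]; rwa [smul_eq_mul, smul_eq_mul] at hzw
    exact h _ this
  · intro h x hx
    have : a • (Submodule.Quotient.mk x : R ⧸ L) = a • (0 : R ⧸ L) := by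
      rw [smul_zero, ← Submodule.Quotient.mk_smul, Submodule.Quotient.mk_eq_zero]
      exact hx
    have := h this
    rwa [← Submodule.Quotient.mk_eq_zero (p := L)]

lemma regSeqOn_append {K : Ideal R} {l₁ l₂ : List R} :
    RegSeqOn K (l₁ ++ l₂) ↔ RegSeqOn K l₁ ∧ RegSeqOn (K ⊔ Ideal.ofList l₁) l₂ := by
  induction l₁ generalizing K with
  | nil => simp [RegSeqOn]
  | cons a l ih =>
      simp only [List.cons_append, regSeqOn_cons, ih, Ideal.ofList_cons]
      rw [and_assoc]
      constructor
      · rintro ⟨h1, h2, h3⟩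
        refine ⟨h1, h2, ?_⟩
        simpa [sup_assoc] using h3
      · rintro ⟨h1, h2, h3⟩
        refine ⟨h1, h2, ?_⟩
        simpa [sup_assoc] using h3

lemma RegSeqOn.take {K : Ideal R} {l : List R} (h : RegSeqOn K l) (i : ℕ) :
    RegSeqOn K (l.take i) := by
  have := (regSeqOn_append (K := K) (l₁ := l.take i) (l₂ := l.drop i))
  rw [List.take_append_drop] at this
  exact (this.mp h).1

lemma RegSeqOn.regOn_getElem {K : Ideal R} {l : List R} (h : RegSeqOn K l)
    (i : ℕ) (hi : i < l.length) :
    RegOn (K ⊔ Ideal.ofList (l.take i)) l[i] := by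
  induction l generalizing K i with
  | nil => simp at hi
  | cons a l ih =>
      cases i with
      | zero => simpa using h.1
      | succ i =>
          have := ih h.2 i (by simpa using Nat.lt_of_succ_lt_succ hi)
          simp only [List.take_succ_cons, Ideal.ofList_cons, List.getElem_cons_succ]
          rwa [← sup_assoc]

/-- The swap lemma: if `a` is regular on `R⧸K` and `b` is regular on `R⧸(K+(a))`,
then `a` is regular on `R⧸(K+(b))`. -/
lemma regOn_swap {K : Ideal R} {a b : R} (ha : RegOn K a)
    (hb : RegOn (K ⊔ Ideal.span {a}) b) : RegOn (K ⊔ Ideal.span {b}) a := by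
  intro x hx
  obtain ⟨k, hk, w, hw, hkw⟩ := Submodule.mem_sup.mp hx
  obtain ⟨y, rfl⟩ := Ideal.mem_span_singleton'.mp hw
  -- a * x = k + y * b
  have hby : b * y ∈ K ⊔ Ideal.span {a} := by
    have : b * y = a * x - k := by rw [← hkw]; ring
    rw [this]
    exact Submodule.sub_mem _ (Submodule.mem_sup_right
      (Ideal.mem_span_singleton'.mpr ⟨x, by ring⟩)) (Submodule.mem_sup_left hk)
  have hy := hb y hby
  obtain ⟨k', hk', w', hw', hkw'⟩ := Submodule.mem_sup.mp hy
  obtain ⟨z, rfl⟩ := Ideal.mem_span_singleton'.mp hw'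
  -- y = k' + z * a
  have key : a * (x - b * z) ∈ K := by
    have : a * (x - b * z) = k + b * k' := by
      have h1 : a * x = k + (k' + z * a) * b := by rw [hkw', hkw]
      ring_nf
      ring_nf at h1
      linear_combination h1
    rw [this]
    exact Submodule.add_mem _ hk (Ideal.mul_mem_left _ _ hk')
  have := ha _ key
  have hxmem : x ∈ K ⊔ Ideal.span {b} := by
    have : x = (x - b * z) + z * b := by ring
    rw [this]
    exact Submodule.add_mem _ (Submodule.mem_sup_left (ha _ key))
      (Submodule.mem_sup_right (Ideal.mem_span_singleton'.mpr ⟨z, rfl⟩))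
  exact hxmem

/-- Bubbling: if `rs` is a regular sequence on `R⧸K` and `c` is regular at every stage
(including the last), then `c :: rs` is a regular sequence on `R⧸K`. -/
lemma regSeqOn_cons_of_stages {K : Ideal R} {rs : List R} {c : R} (h : RegSeqOn K rs)
    (hc : ∀ i ≤ rs.length, RegOn (K ⊔ Ideal.ofList (rs.take i)) c) :
    RegSeqOn K (c :: rs) := by
  induction rs generalizing K with
  | nil =>
      refine ⟨?_, trivial⟩
      have := hc 0 (le_refl 0)
      simpa using this
  | cons a l ih =>
      obtain ⟨ha, hl⟩ := h
      have hcK : RegOn K c := by simpa using hc 0 (by simp)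
      have hstages : ∀ i ≤ l.length, RegOn ((K ⊔ Ideal.span {a}) ⊔ Ideal.ofList (l.take i)) c := by
        intro i hi
        have := hc (i + 1) (by simpa using Nat.succ_le_succ hi)
        simp only [List.take_succ_cons, Ideal.ofList_cons] at this
        rwa [← sup_assoc] at this
      have hcons := ih hl hstages
      -- hcons : RegSeqOn (K ⊔ span a) (c :: l)
      refine ⟨hcK, ?_, ?_⟩
      · -- RegOn (K ⊔ span c) a
        exact regOn_swap ha hcons.1
      · -- RegSeqOn (K ⊔ span c ⊔ span a) l
        have := hcons.2
        rwa [sup_assoc, sup_comm (Ideal.span {a}), ← sup_assoc] at this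

/-- Kaplansky's exchange lemma. -/
lemma zdall_exchange {K I : Ideal R} {a b : R} (ha : RegOn K a) (hb : RegOn K b)
    (hbI : b ∈ I) (h : ZDall I (K ⊔ Ideal.span {a})) : ZDall I (K ⊔ Ideal.span {b}) := by
  obtain ⟨u, hu, hIu⟩ := h
  obtain ⟨k₀, hk₀, w, hw, hkw⟩ := Submodule.mem_sup.mp (hIu b hbI)
  obtain ⟨v, rfl⟩ := Ideal.mem_span_singleton'.mp hw
  -- b * u = k₀ + v * a
  refine ⟨v, ?_, ?_⟩
  · intro hv
    apply hu
    obtain ⟨k₁, hk₁, w₁, hw₁, hkw₁⟩ := Submodule.mem_sup.mp hv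
    obtain ⟨w', rfl⟩ := Ideal.mem_span_singleton'.mp hw₁
    -- v = k₁ + w' * b
    have key : b * (u - w' * a) ∈ K := by
      have : b * (u - w' * a) = k₀ + a * k₁ := by
        have h1 : b * u = k₀ + (k₁ + w' * b) * a := by rw [hkw₁, hkw]
        linear_combination h1
      rw [this]
      exact Submodule.add_mem _ hk₀ (Ideal.mul_mem_left _ _ hk₁)
    have := hb _ key
    have : u = (u - w' * a) + w' * a := by ring
    rw [this]
    exact Submodule.add_mem _ (Submodule.mem_sup_left (hb _ key))
      (Submodule.mem_sup_right (Ideal.mem_span_singleton'.mpr ⟨w', rfl⟩))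
  · intro c hc
    obtain ⟨k₂, hk₂, w₂, hw₂, hkw₂⟩ := Submodule.mem_sup.mp (hIu c hc)
    obtain ⟨u', rfl⟩ := Ideal.mem_span_singleton'.mp hw₂
    -- c * u = k₂ + u' * a
    have key : a * (c * v - b * u') ∈ K := by
      have : a * (c * v - b * u') = b * k₂ - c * k₀ := by
        have h1 : b * u = k₀ + v * a := hkw.symm
        have h2 : c * u = k₂ + u' * a := hkw₂.symm
        linear_combination b * h2 - c * h1
      rw [this]
      exact Submodule.sub_mem _ (Ideal.mul_mem_left _ _ hk₂) (Ideal.mul_mem_left _ _ hk₀)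
    have := ha _ key
    have heq : c * v = (c * v - b * u') + u' * b := by ring
    rw [heq]
    exact Submodule.add_mem _ (Submodule.mem_sup_left this)
      (Submodule.mem_sup_right (Ideal.mem_span_singleton'.mpr ⟨u', rfl⟩))

lemma exists_regOn_of_not_zdall [IsNoetherianRing R] {I L : Ideal R} (h : ¬ ZDall I L) :
    ∃ c ∈ I, RegOn L c := by
  by_contra hcon
  push_neg at hcon
  have hall : ∀ c ∈ I, ¬ IsSMulRegular (R ⧸ L) c := by
    intro c hc
    rw [← regOn_iff_isSMulRegular]
    exact hcon c hc
  obtain ⟨u, hu, hIu⟩ := exists_ann_of_allZD hall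
  obtain ⟨v, rfl⟩ := Submodule.Quotient.mk_surjective L u
  refine h ⟨v, ?_, ?_⟩
  · intro hv; exact hu (by rwa [Submodule.Quotient.mk_eq_zero])
  · intro c hc
    have := hIu c hc
    rwa [← Submodule.Quotient.mk_smul, Submodule.Quotient.mk_eq_zero, smul_eq_mul] at this

lemma exists_regOn_forall_mem [IsNoetherianRing R] {I : Ideal R} (Ls : List (Ideal R))
    (h : ∀ L ∈ Ls, ∃ c ∈ I, RegOn L c) : ∃ c ∈ I, ∀ L ∈ Ls, RegOn L c := by
  by_contra hcon
  push_neg at hcon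
  have hall : ∀ c ∈ I, ¬ IsSMulRegular (∀ i : Fin Ls.length, R ⧸ Ls[i]) c := by
    intro c hc hreg
    obtain ⟨L, hL, hnreg⟩ := hcon c hc
    obtain ⟨i, hi, rfl⟩ := List.mem_iff_getElem.mp hL
    apply hnreg
    rw [regOn_iff_isSMulRegular]
    intro x y hxy
    have : c • Pi.single (M := fun i : Fin Ls.length => R ⧸ Ls[i]) ⟨i, hi⟩ x
        = c • Pi.single (M := fun i : Fin Ls.length => R ⧸ Ls[i]) ⟨i, hi⟩ y := by
      funext j
      by_cases hj : j = ⟨i, hi⟩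
      · subst hj; simp [hxy]
      · simp [Pi.single_eq_of_ne hj]
    have := hreg this
    have := congrFun this ⟨i, hi⟩
    simpa using this
  obtain ⟨u, hu, hIu⟩ := exists_ann_of_allZD hall
  obtain ⟨i, hi⟩ : ∃ i, u i ≠ 0 := by
    by_contra h0
    push_neg at h0
    exact hu (funext h0)
  obtain ⟨c, hc, hreg⟩ := h Ls[i] (List.getElem_mem i.isLt)
  rw [regOn_iff_isSMulRegular] at hreg
  apply hi
  have : c • u i = c • (0 : R ⧸ Ls[i]) := by
    rw [smul_zero]
    have := congrFun (hIu c hc) i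
    simpa using this
  exact hreg this

/-- Key theorem: in a Noetherian ring, if `as` is a maximal regular sequence in `I`
(mod `K`), then any regular sequence `bs` in `I` (mod `K`) has length at most that of `as`. -/
theorem regseq_length_le [IsNoetherianRing R] :
    ∀ (n : ℕ) (K I : Ideal R) (as bs : List R), as.length = n →
      (∀ x ∈ as, x ∈ I) → (∀ x ∈ bs, x ∈ I) →
      RegSeqOn K as → RegSeqOn K bs →
      ZDall I (K ⊔ Ideal.ofList as) → bs.length ≤ n := by
  intro n
  induction n with
  | zero =>
      intro K I as bs hlen hasI hbsI hras hrbs hzd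
      rw [List.length_eq_zero_iff] at hlen
      subst hlen
      cases bs with
      | nil => simp
      | cons b bs' =>
          exfalso
          obtain ⟨u, hu, hIu⟩ := hzd
          rw [Ideal.ofList_nil, sup_bot_eq] at hu hIu
          exact hu (hrbs.1 u (hIu b (hbsI b (List.mem_cons_self (a := b) (l := bs')))))
  | succ n ih =>
      intro K I as bs hlen hasI hbsI hras hrbs hzd
      cases bs with
      | nil => simp
      | cons b bs' =>
          obtain (rfl | ⟨as', a, rfl⟩) := as.eq_nil_or_concat
          · simp at hlen
          simp only [List.concat_eq_append] at hlen hasI hras hzd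
          have hlen' : as'.length = n := by simpa using hlen
          set m := bs'.length + 1 with hm
          -- the stage ideals
          set Ls : List (Ideal R) :=
            (List.range (n+1)).map (fun i => K ⊔ Ideal.ofList ((as' ++ [a]).take i)) ++
            (List.range m).map (fun j => K ⊔ Ideal.ofList ((b :: bs').take j)) with hLs
          have hstage : ∀ L ∈ Ls, ∃ c ∈ I, RegOn L c := by
            intro L hL
            rw [hLs, List.mem_append, List.mem_map, List.mem_map] at hL
            rcases hL with ⟨i, hi, rfl⟩ | ⟨j, hj, rfl⟩
            · rw [List.mem_range] at hi
              have hi' : i < (as' ++ [a]).length := by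
                simp only [List.length_append, List.length_singleton, hlen']; omega
              exact ⟨(as' ++ [a])[i], hasI _ (List.getElem_mem hi'),
                hras.regOn_getElem i hi'⟩
            · rw [List.mem_range] at hj
              have hj' : j < (b :: bs').length := by rw [List.length_cons]; omega
              exact ⟨(b :: bs')[j], hbsI _ (List.getElem_mem hj'),
                hrbs.regOn_getElem j hj'⟩
          obtain ⟨c, hcI, hcreg⟩ := exists_regOn_forall_mem Ls hstage
          have hcas : ∀ i ≤ as'.length, RegOn (K ⊔ Ideal.ofList (as'.take i)) c := by
            intro i hi
            have : (K ⊔ Ideal.ofList ((as' ++ [a]).take i)) ∈ Ls := by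
              rw [hLs, List.mem_append]
              left
              exact List.mem_map.mpr ⟨i, List.mem_range.mpr (by omega), rfl⟩
            have := hcreg _ this
            rwa [List.take_append_of_le_length hi] at this
          have hcbs : ∀ j ≤ bs'.length, RegOn (K ⊔ Ideal.ofList ((b :: bs').take j)) c := by
            intro j hj
            apply hcreg
            rw [hLs, List.mem_append]
            right
            exact List.mem_map.mpr ⟨j, List.mem_range.mpr (by omega), rfl⟩
          -- exchange at the top of as
          have haslast : RegOn (K ⊔ Ideal.ofList as') a := by
            have := hras.regOn_getElem as'.length (by simp)
            simpa [List.take_left] using this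
          have hclast : RegOn (K ⊔ Ideal.ofList as') c := by
            have := hcas as'.length le_rfl
            rwa [List.take_length] at this
          have hzd' : ZDall I ((K ⊔ Ideal.ofList as') ⊔ Ideal.span {c}) := by
            apply zdall_exchange haslast hclast hcI
            have : (K ⊔ Ideal.ofList as') ⊔ Ideal.span {a} = K ⊔ Ideal.ofList (as' ++ [a]) := by
              rw [Ideal.ofList_append, Ideal.ofList_singleton, sup_assoc]
            rwa [this]
          -- bubble c to the front of as'
          have hras' : RegSeqOn K as' := by
            have := hras.take as'.length
            rwa [List.take_left] at this
          have hbub_as : RegSeqOn K (c :: as') := regSeqOn_cons_of_stages hras' hcas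
          -- bubble c to the front of (b :: bs').take bs'.length
          have hbs0 : RegSeqOn K ((b :: bs').take bs'.length) := hrbs.take _
          have hbub_bs : RegSeqOn K (c :: (b :: bs').take bs'.length) := by
            apply regSeqOn_cons_of_stages hbs0
            intro j hj
            have hj' : j ≤ bs'.length := le_trans hj (by simp)
            have := hcbs j hj'
            rw [List.take_take, min_eq_left hj']; exact this
          have hzd'' : ZDall I ((K ⊔ Ideal.span {c}) ⊔ Ideal.ofList as') := by
            have : (K ⊔ Ideal.span {c}) ⊔ Ideal.ofList as'
                = (K ⊔ Ideal.ofList as') ⊔ Ideal.span {c} := by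
              rw [sup_assoc, sup_assoc, sup_comm (Ideal.span {c})]
            rw [this]
            exact hzd'
          have hfin := ih (K ⊔ Ideal.span {c}) I as' ((b :: bs').take bs'.length) hlen'
            (fun x hx => hasI x (List.mem_append.mpr (Or.inl hx)))
            (fun x hx => hbsI x (List.take_subset _ _ hx))
            hbub_as.2 hbub_bs.2 hzd''
          simp only [List.length_take, List.length_cons] at hfin ⊢
          omega


lemma exists_maximal_regSeqOn [IsNoetherianRing R] (I : Ideal R) (hI : I ≠ ⊤) :
    ∃ as : List R, (∀ x ∈ as, x ∈ I) ∧ RegSeqOn ⊥ as ∧ ZDall I (Ideal.ofList as) := by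
  obtain ⟨J, hJmem, hJmax⟩ := set_has_maximal_iff_noetherian.mpr inferInstance
    {J : Ideal R | ∃ as : List R, (∀ x ∈ as, x ∈ I) ∧ RegSeqOn ⊥ as ∧ J = Ideal.ofList as}
    ⟨⊥, [], by simp, trivial, by simp⟩
  obtain ⟨as, hmem, hreg, rfl⟩ := hJmem
  refine ⟨as, hmem, hreg, ?_⟩
  by_contra hzd
  obtain ⟨c, hcI, hcreg⟩ := exists_regOn_of_not_zdall hzd
  have hproper : Ideal.ofList as ≠ ⊤ := by
    intro h
    have : Ideal.ofList as ≤ I := Ideal.span_le.mpr (fun x hx => hmem x hx)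
    exact hI (top_le_iff.mp (h ▸ this))
  have hcnot : c ∉ Ideal.ofList as := by
    intro hc
    have := hcreg 1 (by simpa using hc)
    exact hproper ((Ideal.eq_top_iff_one _).mpr this)
  apply hJmax (Ideal.ofList (as ++ [c]))
  · exact ⟨as ++ [c], by
      intro x hx
      rcases List.mem_append.mp hx with h | h
      · exact hmem x h
      · rw [List.mem_singleton] at h; exact h ▸ hcI,
      by
        rw [regSeqOn_append]
        refine ⟨hreg, ?_⟩
        rw [bot_sup_eq]
        exact ⟨hcreg, trivial⟩, rfl⟩
  · rw [Ideal.ofList_append, Ideal.ofList_singleton]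
    refine lt_of_le_of_ne le_sup_left ?_
    intro h
    exact hcnot (h ▸ Submodule.mem_sup_right (Ideal.mem_span_singleton_self c))

open MvPolynomial in
lemma regOn_map {K : Ideal R} {a : R} (h : RegOn K a) :
    RegOn (K.map (C : R →+* MvPolynomial σ R)) (C a) := by
  intro f hf
  rw [MvPolynomial.mem_map_C_iff] at hf ⊢
  intro m
  have := hf m
  rw [MvPolynomial.coeff_C_mul] at this
  exact h _ this

open MvPolynomial in
lemma regSeqOn_map {K : Ideal R} {as : List R} (h : RegSeqOn K as) :
    RegSeqOn (K.map (C : R →+* MvPolynomial σ R)) (as.map C) := by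
  induction as generalizing K with
  | nil => trivial
  | cons a l ih =>
      refine ⟨regOn_map h.1, ?_⟩
      have := ih h.2
      rwa [Ideal.map_sup, Ideal.map_span, Set.image_singleton] at this

open MvPolynomial in
lemma zdall_map {I K : Ideal R} (h : ZDall I K) :
    ZDall (I.map (C : R →+* MvPolynomial σ R)) (K.map (C : R →+* MvPolynomial σ R)) := by
  obtain ⟨u, hu, hIu⟩ := h
  refine ⟨C u, ?_, ?_⟩
  · intro hc
    rw [MvPolynomial.mem_map_C_iff] at hc
    have := hc 0
    rw [MvPolynomial.coeff_zero_C] at this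
    exact hu this
  · intro f hf
    rw [MvPolynomial.mem_map_C_iff] at hf ⊢
    intro m
    rw [mul_comm f (MvPolynomial.C u), MvPolynomial.coeff_C_mul, mul_comm]
    exact hIu _ (hf m)

lemma regSeqOn_iff_forall {K : Ideal R} {l : List R} :
    RegSeqOn K l ↔ ∀ i (h : i < l.length), RegOn (K ⊔ Ideal.ofList (l.take i)) l[i] := by
  induction l generalizing K with
  | nil => simp [RegSeqOn]
  | cons a l ih =>
    rw [regSeqOn_cons, ih]
    constructor
    · rintro ⟨h1, h2⟩ i hi
      cases i with
      | zero => simpa using h1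
      | succ i =>
          have := h2 i (by simpa using Nat.lt_of_succ_lt_succ hi)
          simp only [List.take_succ_cons, Ideal.ofList_cons, List.getElem_cons_succ]
          rwa [← sup_assoc]
    · intro h
      constructor
      · have := h 0 (by simp)
        simp only [List.take_zero, Ideal.ofList_nil, sup_bot_eq] at this
        exact this
      · intro i hi
        have := h (i+1) (by simpa using Nat.succ_lt_succ hi)
        simp only [List.take_succ_cons, Ideal.ofList_cons, List.getElem_cons_succ] at this
        rwa [sup_assoc]

lemma smul_top_ideal (J : Ideal R) : (J • ⊤ : Submodule R R) = J := by
  rw [Ideal.smul_eq_mul, Ideal.mul_top]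

lemma isRegular_iff_regSeqOn {I : Ideal R} (hI : I ≠ ⊤) {rs : List R}
    (hmem : ∀ r ∈ rs, r ∈ I) :
    RingTheory.Sequence.IsRegular R rs ↔ RegSeqOn ⊥ rs := by
  rw [RingTheory.Sequence.isRegular_iff, RingTheory.Sequence.isWeaklyRegular_iff,
    regSeqOn_iff_forall]
  have hof : Ideal.ofList rs ≤ I := Ideal.span_le.mpr (fun x hx => hmem x hx)
  constructor
  · rintro ⟨h1, _⟩ i hi
    have := h1 i hi
    rw [smul_top_ideal] at this
    rw [bot_sup_eq, regOn_iff_isSMulRegular]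
    exact this
  · intro h
    refine ⟨fun i hi => ?_, fun htop => ?_⟩
    · have := h i hi
      rw [bot_sup_eq, regOn_iff_isSMulRegular] at this
      rw [smul_top_ideal]
      exact this
    · rw [smul_top_ideal] at htop
      exact hI (top_le_iff.mp (htop ▸ hof))

end NorthcottAux

theorem polynomial_grade_eq_grade
    (R : Type*) [CommRing R] [IsNoetherianRing R] (I : Ideal R) (hI : I ≠ ⊤) :
    (∀ n : ℕ,
      regSeqSup (Ideal.map (MvPolynomial.C : R →+* MvPolynomial (Fin n) R) I) = idealGrade I) ∧
    (⨆ n : ℕ,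
      regSeqSup (Ideal.map (MvPolynomial.C : R →+* MvPolynomial (Fin n) R) I)) = idealGrade I := by
  have key : ∀ n : ℕ,
      regSeqSup (Ideal.map (MvPolynomial.C : R →+* MvPolynomial (Fin n) R) I) = idealGrade I := by
    intro n
    obtain ⟨as, hmem, hreg, hzd⟩ := exists_maximal_regSeqOn I hI
    have hIC : (I.map (MvPolynomial.C : R →+* MvPolynomial (Fin n) R)) ≠ ⊤ := by
      intro htop
      apply hI
      rw [Ideal.eq_top_iff_one] at htop ⊢
      have := MvPolynomial.mem_map_C_iff.mp htop 0
      rwa [MvPolynomial.coeff_zero_one] at this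
    have h1 : regSeqSup I = (as.length : ℕ∞) := by
      apply le_antisymm
      · apply sSup_le
        rintro N ⟨bs, hbsI, hbsreg, rfl⟩
        have := regseq_length_le as.length ⊥ I as bs rfl hmem hbsI hreg
          ((isRegular_iff_regSeqOn hI hbsI).mp hbsreg) (by rwa [bot_sup_eq])
        exact_mod_cast this
      · exact le_sSup ⟨as, hmem, (isRegular_iff_regSeqOn hI hmem).mpr hreg, rfl⟩
    have hmem' : ∀ f ∈ as.map (MvPolynomial.C : R →+* MvPolynomial (Fin n) R),
        f ∈ I.map (MvPolynomial.C : R →+* MvPolynomial (Fin n) R) := by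
      intro f hf
      obtain ⟨r, hr, rfl⟩ := List.mem_map.mp hf
      exact Ideal.mem_map_of_mem _ (hmem r hr)
    have hreg' : RegSeqOn ⊥ (as.map (MvPolynomial.C : R →+* MvPolynomial (Fin n) R)) := by
      have := regSeqOn_map (σ := Fin n) hreg
      rwa [Ideal.map_bot] at this
    have hzd' : ZDall (I.map (MvPolynomial.C : R →+* MvPolynomial (Fin n) R))
        (Ideal.ofList (as.map (MvPolynomial.C : R →+* MvPolynomial (Fin n) R))) := by
      have := zdall_map (σ := Fin n) hzd
      rwa [Ideal.map_ofList] at this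
    have h2 : regSeqSup (I.map (MvPolynomial.C : R →+* MvPolynomial (Fin n) R))
        = (as.length : ℕ∞) := by
      apply le_antisymm
      · apply sSup_le
        rintro N ⟨bs, hbsI, hbsreg, rfl⟩
        have := regseq_length_le (as.map (MvPolynomial.C : R →+* MvPolynomial (Fin n) R)).length
          ⊥ (I.map (MvPolynomial.C : R →+* MvPolynomial (Fin n) R))
          (as.map (MvPolynomial.C : R →+* MvPolynomial (Fin n) R)) bs rfl hmem' hbsI hreg'
          ((isRegular_iff_regSeqOn hIC hbsI).mp hbsreg) (by rwa [bot_sup_eq])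
        rw [List.length_map] at this
        exact_mod_cast this
      · refine le_sSup ⟨as.map (MvPolynomial.C : R →+* MvPolynomial (Fin n) R), hmem',
          (isRegular_iff_regSeqOn hIC hmem').mpr hreg', by rw [List.length_map]⟩
    rw [idealGrade, if_neg hI, h1, h2]
  exact ⟨key, by simp only [key, iSup_const]⟩
end
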